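/- Let Ω ⊆ Ā be non-empty and a ∈ Φ^red. Then f_Ω(a) = −∞ if and only if for every face F = F_Y^Δ ∈ Σ with Ω ∩ A_F ≠ ∅ the following holds: a ∉ ⟨Y⟩ and for every λ ∈ Λ with [λ₀(Δ) − λ] ⊆ Y and every positive integer l, the element λ + l·a does not lie in Λ. -/

import Mathlib

/-!
Common setup for Werner, "Compactifications of Bruhat-Tits buildings associated to
linear representations":  a finite-dimensional real vector space `A` (the apartment),
a root system `Φ` in the dual space together with a Weyl-group invariant inner
product, a finite Weyl-invariant set `Λ` of (K-)weights, and for every basis `Δ`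
of `Φ` a highest weight `lam0 Δ ∈ Λ`.
-/

open Pointwise Filter Topology Bornology
open scoped Classical

noncomputable section

/-- A set `M` of linear forms is *connected* if the graph with vertex set `M` and an
edge between `m` and `n` iff `inn m n ≠ 0` is connected. -/
def GraphConnected {D : Type*} (inn : D → D → ℝ) (M : Set D) : Prop :=
  ∀ m ∈ M, ∀ n ∈ M,
    Relation.ReflTransGen (fun x y => x ∈ M ∧ y ∈ M ∧ inn x y ≠ 0) m n

/-- The coefficients of `μ` as a linear combination of the elements of `Δ` (chosen
arbitrarily if one exists; it is unique when `Δ` is linearly independent). -/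
noncomputable def coeffs {A : Type*} [AddCommGroup A] [Module ℝ A]
    (Δ : Finset (Module.Dual ℝ A)) (μ : Module.Dual ℝ A) : Module.Dual ℝ A → ℝ :=
  if h : ∃ n : Module.Dual ℝ A → ℝ, μ = ∑ b ∈ Δ, n b • b then h.choose else fun _ => 0

/-- The support `[μ]` of `μ` with respect to the basis `Δ`: the set of elements of `Δ`
whose coefficient in `μ` is nonzero. -/
noncomputable def supp {A : Type*} [AddCommGroup A] [Module ℝ A]
    (Δ : Finset (Module.Dual ℝ A)) (μ : Module.Dual ℝ A) : Finset (Module.Dual ℝ A) :=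
  Δ.filter fun a => coeffs Δ μ a ≠ 0

/-- Raw data: a finite set `Φ` of roots in the dual of `A`, a product `inn` on the dual,
a finite set `Λ` of weights, and a highest weight `lam0 Δ` for every basis `Δ`. -/
structure RootWeightData (A : Type*) [NormedAddCommGroup A] [NormedSpace ℝ A]
    [FiniteDimensional ℝ A] where
  Φ : Finset (Module.Dual ℝ A)
  inn : Module.Dual ℝ A → Module.Dual ℝ A → ℝ
  Λ : Finset (Module.Dual ℝ A)
  lam0 : Finset (Module.Dual ℝ A) → Module.Dual ℝ A

namespace RootWeightData

variable {A : Type*} [NormedAddCommGroup A] [NormedSpace ℝ A] [FiniteDimensional ℝ A]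
variable (S : RootWeightData A)

/-- The reflection associated to the root `a`. -/
def refl (a : Module.Dual ℝ A) : Function.End (Module.Dual ℝ A) :=
  fun x => x - (2 * S.inn x a / S.inn a a) • a

/-- The Weyl group `W`, generated by the reflections in the roots. -/
def weyl : Submonoid (Function.End (Module.Dual ℝ A)) :=
  Submonoid.closure {f | ∃ a ∈ S.Φ, f = S.refl a}

/-- `Δ` is a basis of the root system `Φ`: a linearly independent subset of `Φ` such
that every root is a nonnegative or nonpositive linear combination of `Δ`. -/
def IsBase (Δ : Finset (Module.Dual ℝ A)) : Prop :=
  (↑Δ : Set (Module.Dual ℝ A)) ⊆ (S.Φ : Set (Module.Dual ℝ A)) ∧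
  LinearIndependent ℝ (fun a : (Δ : Set (Module.Dual ℝ A)) => (a : Module.Dual ℝ A)) ∧
  ∀ a ∈ S.Φ,
    (∃ n : Module.Dual ℝ A → ℝ, (∀ b ∈ Δ, 0 ≤ n b) ∧ a = ∑ b ∈ Δ, n b • b) ∨
    (∃ n : Module.Dual ℝ A → ℝ, (∀ b ∈ Δ, 0 ≤ n b) ∧ a = -∑ b ∈ Δ, n b • b)

/-- `Y` is an admissible subset of the basis `Δ`: `Y ⊆ Δ` and `Y ∪ {λ₀(Δ)}` is
connected. -/
def Admissible (Δ Y : Finset (Module.Dual ℝ A)) : Prop :=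
  Y ⊆ Δ ∧ GraphConnected S.inn ((↑Y : Set (Module.Dual ℝ A)) ∪ {S.lam0 Δ})

end RootWeightData

/-- The whole setting of Werner's paper: the data of `RootWeightData`, where `Φ` is a
(crystallographic, possibly non-reduced) root system spanning the dual of `A`, `inn` is
a Weyl-invariant inner product, `Λ` is a finite Weyl-invariant set of weights, and
`lam0` picks, Weyl-equivariantly, a highest weight for each basis, dominating all of
`Λ`; moreover a subset of a basis is admissible iff it is the support of
`λ₀(Δ) - λ` for some weight `λ`. -/
structure RootWeightSystem (A : Type*) [NormedAddCommGroup A] [NormedSpace ℝ A]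
    [FiniteDimensional ℝ A] extends RootWeightData A where
  inn_symm : ∀ x y, inn x y = inn y x
  inn_add_left : ∀ x y z, inn (x + y) z = inn x z + inn y z
  inn_smul_left : ∀ (c : ℝ) (x y), inn (c • x) y = c * inn x y
  inn_pos : ∀ x, x ≠ 0 → 0 < inn x x
  root_ne_zero : ∀ a ∈ Φ, a ≠ (0 : Module.Dual ℝ A)
  neg_mem : ∀ a ∈ Φ, -a ∈ Φ
  refl_mem : ∀ a ∈ Φ, ∀ b ∈ Φ, toRootWeightData.refl a b ∈ Φ
  inn_weyl_invariant :
    ∀ w ∈ toRootWeightData.weyl, ∀ x y, inn (w x) (w y) = inn x y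
  phi_spans : Submodule.span ℝ (Φ : Set (Module.Dual ℝ A)) = ⊤
  exists_base : ∃ Δ, toRootWeightData.IsBase Δ
  base_cover : ∀ x : A, ∃ Δ, toRootWeightData.IsBase Δ ∧ ∀ a ∈ Δ, 0 ≤ a x
  base_weyl : ∀ w ∈ toRootWeightData.weyl, ∀ Δ, toRootWeightData.IsBase Δ →
    toRootWeightData.IsBase (Δ.image (w : Module.Dual ℝ A → Module.Dual ℝ A))
  lam0_mem : ∀ Δ, toRootWeightData.IsBase Δ → lam0 Δ ∈ Λ
  lam0_dominates : ∀ Δ, toRootWeightData.IsBase Δ → ∀ l ∈ Λ,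
    ∃ n : Module.Dual ℝ A → ℝ, (∀ a ∈ Δ, 0 ≤ n a) ∧ lam0 Δ - l = ∑ a ∈ Δ, n a • a
  weight_weyl_invariant : ∀ w ∈ toRootWeightData.weyl, ∀ l ∈ Λ, w l ∈ Λ
  lam0_equivariant : ∀ w ∈ toRootWeightData.weyl, ∀ Δ, toRootWeightData.IsBase Δ →
    lam0 (Δ.image (w : Module.Dual ℝ A → Module.Dual ℝ A)) = w (lam0 Δ)
  integrality : ∀ l ∈ Λ, ∀ a ∈ Φ, ∃ k : ℤ, 2 * inn l a / inn a a = (k : ℝ)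
  admissible_iff_support : ∀ Δ, toRootWeightData.IsBase Δ → ∀ Y ⊆ Δ,
    (toRootWeightData.Admissible Δ Y ↔ ∃ l ∈ Λ, supp Δ (lam0 Δ - l) = Y)

namespace RootWeightSystem

variable {A : Type*} [NormedAddCommGroup A] [NormedSpace ℝ A] [FiniteDimensional ℝ A]
variable (S : RootWeightSystem A)

/-- The face `F_Y^Δ` of the apartment `A` associated to a basis `Δ` and an admissible
subset `Y ⊆ Δ`. -/
def Face (Δ Y : Finset (Module.Dual ℝ A)) : Set A :=
  {x | (∀ a ∈ Y, a x = 0) ∧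
    ∀ l ∈ S.Λ, ¬ supp Δ (S.lam0 Δ - l) ⊆ Y → 0 < (S.lam0 Δ - l) x}

/-- `F` belongs to the collection `Σ` of faces. -/
def IsFace (F : Set A) : Prop :=
  ∃ Δ Y, S.toRootWeightData.IsBase Δ ∧ S.toRootWeightData.Admissible Δ Y ∧
    F = S.Face Δ Y

/-- The collection `Σ` of all faces. -/
def Faces : Type _ := {F : Set A // S.IsFace F}

/-- The relation identifying `(F, u)` and `(F, v)` when `u - v ∈ ⟨F⟩`; the quotient is
the disjoint union `Ā = ⊔_{F ∈ Σ} A/⟨F⟩`. -/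
def AbarRel (p q : S.Faces × A) : Prop :=
  p.1 = q.1 ∧ p.2 - q.2 ∈ Submodule.span ℝ p.1.val

/-- The compactified apartment `Ā = ⊔_{F ∈ Σ} A_F`, `A_F = A/⟨F⟩`. -/
def Abar : Type _ := Quot S.AbarRel

/-- `r_F(u)`, the image of `u ∈ A` in the stratum `A_F` of `Ā`. -/
def mkAbar (F : S.Faces) (u : A) : S.Abar := Quot.mk _ (F, u)

/-- The basic set `Γ_F(U) = ⋃_{F' ⊆ cl F} r_{F'}(U + F)` of `Ā`. -/
def Gamma (F : S.Faces) (U : Set A) : Set S.Abar :=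
  {p | ∃ F' : S.Faces, F'.val ⊆ closure F.val ∧ ∃ u ∈ U + F.val, p = S.mkAbar F' u}

/-- The topology of `Ā`, generated by the sets `Γ_F(U)` for `F ∈ Σ` and `U ⊆ A`
bounded and open. -/
instance : TopologicalSpace S.Abar :=
  TopologicalSpace.generateFrom
    {V : Set S.Abar | ∃ (F : S.Faces) (U : Set A),
      IsOpen U ∧ IsBounded U ∧ V = S.Gamma F U}

/-- `f_Ω(a) = inf {t : Ω ⊆ cl_Ā {z ∈ A : a(z) ≥ -t}} ∈ ℝ ∪ {±∞}`, where `A` is embedded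
in `Ā` as the stratum of the face `F₀ = {0}`. -/
def fOmega (F₀ : S.Faces) (Ω : Set S.Abar) (a : Module.Dual ℝ A) : EReal :=
  sInf ((fun t : ℝ => (t : EReal)) ''
    {t : ℝ | Ω ⊆ closure (S.mkAbar F₀ '' {z : A | -t ≤ a z})})

end RootWeightSystem


variable {A : Type*} [NormedAddCommGroup A] [NormedSpace ℝ A] [FiniteDimensional ℝ A]

/-! ### Auxiliary infrastructure -/

section Aux
set_option linter.unusedSectionVars false

variable {A₀ : Type*} [NormedAddCommGroup A₀] [NormedSpace ℝ A₀] [FiniteDimensional ℝ A₀]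

local notation "D" => Module.Dual ℝ A₀

/-- Killing a linear combination over a linearly independent finset. -/
lemma base_sum_eq_zero {Δ : Finset D}
    (hli : LinearIndependent ℝ (fun a : (Δ : Set D) => (a : D)))
    (g : D → ℝ) (h : ∑ b ∈ Δ, g b • b = 0) : ∀ b ∈ Δ, g b = 0 := by
  have hli' : LinearIndependent ℝ (fun a : {x // x ∈ Δ} => (a : D)) := hli
  have h' : ∑ i ∈ Δ.attach, g i.val • (i : D) = 0 := by
    rw [Finset.sum_attach Δ (fun b => g b • b)]; exact h
  intro b hb
  exact linearIndependent_iff'.1 hli' Δ.attach (fun i => g i.val) h' ⟨b, hb⟩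
    (Finset.mem_attach _ _)

lemma base_rep_unique {Δ : Finset D}
    (hli : LinearIndependent ℝ (fun a : (Δ : Set D) => (a : D)))
    {n m : D → ℝ} (h : ∑ b ∈ Δ, n b • b = ∑ b ∈ Δ, m b • b) :
    ∀ b ∈ Δ, n b = m b := by
  have h0 : ∑ b ∈ Δ, (n b - m b) • b = 0 := by
    have : ∑ b ∈ Δ, (n b - m b) • b = ∑ b ∈ Δ, n b • b - ∑ b ∈ Δ, m b • b := by
      rw [← Finset.sum_sub_distrib]
      exact Finset.sum_congr rfl fun b _ => sub_smul (n b) (m b) b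
    rw [this, h, sub_self]
  intro b hb
  have h2 := base_sum_eq_zero hli (fun b => n b - m b) h0 b hb
  linarith

lemma coeffs_spec {Δ : Finset D} {μ : D}
    (h : ∃ n : D → ℝ, μ = ∑ b ∈ Δ, n b • b) :
    μ = ∑ b ∈ Δ, coeffs Δ μ b • b := by
  rw [coeffs, dif_pos h]; exact h.choose_spec

lemma coeffs_unique {Δ : Finset D}
    (hli : LinearIndependent ℝ (fun a : (Δ : Set D) => (a : D)))
    {μ : D} {n : D → ℝ} (h : μ = ∑ b ∈ Δ, n b • b) :
    ∀ b ∈ Δ, coeffs Δ μ b = n b := by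
  exact base_rep_unique hli ((coeffs_spec ⟨n, h⟩).symm.trans h)

lemma mem_supp_iff {Δ : Finset D} {μ b : D} :
    b ∈ supp Δ μ ↔ b ∈ Δ ∧ coeffs Δ μ b ≠ 0 := Finset.mem_filter

lemma coeffs_eq_zero_of_not_mem_supp {Δ : Finset D} {μ b : D}
    (hb : b ∈ Δ) (h : b ∉ supp Δ μ) : coeffs Δ μ b = 0 := by
  by_contra hne; exact h (mem_supp_iff.2 ⟨hb, hne⟩)

/-- Evaluation of a linear combination of functionals. -/
lemma sum_smul_apply (Δ : Finset D) (n : D → ℝ) (x : A₀) :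
    (∑ b ∈ Δ, n b • b) x = ∑ b ∈ Δ, n b * b x := by
  rw [LinearMap.sum_apply]
  simp [LinearMap.smul_apply]

/-- If `μ` is a combination of `Δ` supported in `Y` and `x` kills `Y`, then `μ x = 0`. -/
lemma eval_eq_zero_of_supp_subset {Δ Y : Finset D}
    {μ : D} (hrep : ∃ n : D → ℝ, μ = ∑ b ∈ Δ, n b • b)
    (hsupp : supp Δ μ ⊆ Y) {x : A₀} (hx : ∀ b ∈ Y, b x = 0) : μ x = 0 := by
  rw [coeffs_spec hrep, sum_smul_apply]
  refine Finset.sum_eq_zero fun b hb => ?_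
  by_cases hs : b ∈ supp Δ μ
  · rw [hx b (hsupp hs), mul_zero]
  · rw [coeffs_eq_zero_of_not_mem_supp hb hs, zero_mul]

/-- A vector achieving prescribed values on a linearly independent finset of functionals. -/
lemma exists_forall_eval {Δ : Finset D}
    (hli : LinearIndependent ℝ (fun a : (Δ : Set D) => (a : D)))
    (c : D → ℝ) : ∃ x : A₀, ∀ b ∈ Δ, b x = c b := by
  classical
  have hli : LinearIndepOn ℝ id (Δ : Set D) := hli
  let B := Module.Basis.extend hli
  let ξ : Module.Dual ℝ D := B.constr ℝ
    (fun i => if (i : D) ∈ Δ then c (i : D) else 0)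
  refine ⟨(Module.evalEquiv ℝ A₀).symm ξ, fun b hb => ?_⟩
  have hbmem : b ∈ hli.extend (Set.subset_univ _) :=
    hli.subset_extend _ (by exact_mod_cast hb)
  have hBb : B ⟨b, hbmem⟩ = b := Module.Basis.extend_apply_self hli ⟨b, hbmem⟩
  have h2 := Module.apply_evalEquiv_symm_apply ℝ A₀ b ξ
  rw [h2, ← hBb, Module.Basis.constr_basis]
  simp only [if_pos (show ((⟨b, hbmem⟩ : hli.extend (Set.subset_univ _)) : D) ∈ Δ from hb)]
  rw [hBb]

end Aux

namespace RootWeightSystem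

set_option linter.unusedSectionVars false

variable {A : Type*} [NormedAddCommGroup A] [NormedSpace ℝ A] [FiniteDimensional ℝ A]
variable (S : RootWeightSystem A)

local notation "D" => Module.Dual ℝ A

lemma inn_zero_left (y : D) : S.inn 0 y = 0 := by
  have := S.inn_smul_left 0 0 y
  simpa using this

lemma inn_sum_left {ι : Type*} (s : Finset ι) (f : ι → D) (y : D) :
    S.inn (∑ i ∈ s, f i) y = ∑ i ∈ s, S.inn (f i) y := by
  classical
  induction s using Finset.induction_on with
  | empty => simpa using S.inn_zero_left y
  | insert _ _ hx ih =>
      rw [Finset.sum_insert hx, Finset.sum_insert hx, S.inn_add_left, ih]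

lemma inn_sub_left (x y z : D) : S.inn (x - y) z = S.inn x z - S.inn y z := by
  have h1 : x - y = x + (-1 : ℝ) • y := by module
  rw [h1, S.inn_add_left, S.inn_smul_left]; ring

lemma inn_smul_right (c : ℝ) (x y : D) : S.inn x (c • y) = c * S.inn x y := by
  rw [S.inn_symm, S.inn_smul_left, S.inn_symm]

lemma inn_self_pos {v : D} (hv : v ∈ S.Φ) : 0 < S.inn v v :=
  S.inn_pos v (S.root_ne_zero v hv)

lemma refl_mem_weyl {v : D} (hv : v ∈ S.Φ) : S.toRootWeightData.refl v ∈ S.toRootWeightData.weyl :=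
  Submonoid.subset_closure ⟨v, hv, rfl⟩

lemma refl_apply (v x : D) :
    S.toRootWeightData.refl v x = x - (2 * S.inn x v / S.inn v v) • v := rfl

lemma refl_weight_mem {v l : D} (hv : v ∈ S.Φ) (hl : l ∈ S.Λ) :
    S.toRootWeightData.refl v l ∈ S.Λ :=
  S.weight_weyl_invariant _ (S.refl_mem_weyl hv) l hl

/-- Pairing of a weight with a root is an integer multiple of half the root length. -/
lemma weight_int {v l : D} (hv : v ∈ S.Φ) (hl : l ∈ S.Λ) :
    ∃ k : ℤ, 2 * S.inn l v / S.inn v v = (k : ℝ) := S.integrality l hl v hv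

section Base

lemma base_li {Δ : Finset D} (hbase : S.toRootWeightData.IsBase Δ) : LinearIndependent ℝ (fun a : (Δ : Set D) => (a : D)) := hbase.2.1

/-- Representation of `lam0 Δ - l` for a weight `l`. -/
lemma weight_rep_exists {Δ : Finset D} (hbase : S.toRootWeightData.IsBase Δ) {l : D} (hl : l ∈ S.Λ) :
    ∃ n : D → ℝ, S.lam0 Δ - l = ∑ b ∈ Δ, n b • b := by
  obtain ⟨n, _, hn⟩ := S.lam0_dominates Δ hbase l hl
  exact ⟨n, hn⟩

lemma weight_coeffs_nonneg {Δ : Finset D} (hbase : S.toRootWeightData.IsBase Δ) {l : D} (hl : l ∈ S.Λ) :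
    ∀ b ∈ Δ, 0 ≤ coeffs Δ (S.lam0 Δ - l) b := by
  obtain ⟨n, hn0, hn⟩ := S.lam0_dominates Δ hbase l hl
  intro b hb
  rw [coeffs_unique (S.base_li hbase) hn b hb]
  exact hn0 b hb

/-- A single element as a combination over the base. -/
lemma single_sum {Δ : Finset D} {b : D} (hb : b ∈ Δ) (c : ℝ) :
    ∑ x ∈ Δ, (if x = b then c else 0) • x = c • b := by
  classical
  have : ∀ x ∈ Δ, (if x = b then c else 0) • x = if x = b then c • x else 0 := by
    intro x _; split <;> simp
  rw [Finset.sum_congr rfl this, Finset.sum_ite_eq' Δ b (fun x => c • x), if_pos hb]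

/-- The highest weight is dominant. -/
lemma lam0_dominant {Δ : Finset D} (hbase : S.toRootWeightData.IsBase Δ) {b : D} (hb : b ∈ Δ) : 0 ≤ S.inn (S.lam0 Δ) b := by
  have hbΦ : b ∈ S.Φ := hbase.1 hb
  have hbb : 0 < S.inn b b := S.inn_self_pos hbΦ
  set c := 2 * S.inn (S.lam0 Δ) b / S.inn b b with hc
  have hμΛ : S.toRootWeightData.refl b (S.lam0 Δ) ∈ S.Λ :=
    S.refl_weight_mem hbΦ (S.lam0_mem Δ hbase)
  obtain ⟨n, hn0, hrep⟩ := S.lam0_dominates Δ hbase _ hμΛ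
  have hdiff : S.lam0 Δ - S.toRootWeightData.refl b (S.lam0 Δ)
      = ∑ x ∈ Δ, (if x = b then c else 0) • x := by
    rw [single_sum hb c, refl_apply, sub_sub_cancel]
  have huniq := base_rep_unique (S.base_li hbase) (hrep.symm.trans hdiff) b hb
  rw [if_pos rfl] at huniq
  have hcn : 0 ≤ c := huniq ▸ hn0 b hb
  rw [hc] at hcn
  rcases div_nonneg_iff.mp hcn with ⟨h1, _⟩ | ⟨_, h2⟩
  · linarith
  · linarith

/-- Distinct elements of a base make an obtuse angle. -/
lemma base_obtuse {Δ : Finset D} (hbase : S.toRootWeightData.IsBase Δ) {b b' : D} (hb : b ∈ Δ) (hb' : b' ∈ Δ)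
    (hne : b ≠ b') :
    S.inn b b' ≤ 0 := by
  classical
  by_contra hpos
  push_neg at hpos
  have hbΦ : b ∈ S.Φ := hbase.1 hb
  have hb'Φ : b' ∈ S.Φ := hbase.1 hb'
  have hbb : 0 < S.inn b b := S.inn_self_pos hbΦ
  set c := 2 * S.inn b' b / S.inn b b with hc
  have hcpos : 0 < c := by
    rw [hc, S.inn_symm b' b]
    positivity
  have hrootΦ : S.toRootWeightData.refl b b' ∈ S.Φ := S.refl_mem b hbΦ b' hb'Φ
  have hform : S.toRootWeightData.refl b b' = b' - c • b := by rw [refl_apply]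
  set m : D → ℝ := fun x => if x = b' then 1 else if x = b then -c else 0 with hm
  have hmsum : ∑ x ∈ Δ, m x • x = b' - c • b := by
    have hsub : ({b', b} : Finset D) ⊆ Δ := by
      intro x hx
      rcases Finset.mem_insert.1 hx with h | h
      · exact h ▸ hb'
      · exact (Finset.mem_singleton.1 h) ▸ hb
    rw [← Finset.sum_subset hsub (fun x _ hnx => ?_)]
    · rw [Finset.sum_pair (fun h => hne h.symm)]
      have h1 : m b' = 1 := by rw [hm]; simp
      have h2 : m b = -c := by rw [hm]; simp [hne]
      rw [h1, h2]; module
    · have hx1 : x ≠ b' := fun h => hnx (by rw [h]; exact Finset.mem_insert_self _ _)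
      have hx2 : x ≠ b := fun h => hnx (by rw [h]; simp)
      rw [hm]; simp [hx1, hx2]
  rcases hbase.2.2 _ hrootΦ with ⟨n, hn0, hn⟩ | ⟨n, hn0, hn⟩
  · have huniq := base_rep_unique (S.base_li hbase)
      ((hn.symm.trans hform).trans hmsum.symm) b hb
    rw [hm] at huniq
    simp [hne] at huniq
    have := hn0 b hb
    rw [huniq] at this
    linarith
  · have hn' : ∑ x ∈ Δ, (-(n x)) • x = b' - c • b := by
      have : ∑ x ∈ Δ, (-(n x)) • x = -∑ x ∈ Δ, n x • x := by
        rw [← Finset.sum_neg_distrib]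
        exact Finset.sum_congr rfl fun x _ => neg_smul (n x) x
      rw [this, ← hn, hform]
    have huniq := base_rep_unique (S.base_li hbase) (hn'.trans hmsum.symm) b' hb'
    have huniq' : -(n b') = m b' := huniq
    have h1' : m b' = 1 := by rw [hm]; simp
    have hge := hn0 b' hb'
    rw [h1'] at huniq'
    linarith
end Base

end RootWeightSystem

/-! ### Graph connectivity helpers -/

section Graph

variable {Dt : Type*}

lemma GraphConnected.mono_rel {inn : Dt → Dt → ℝ} {M M' : Set Dt} (hMM : M ⊆ M')
    {x y : Dt} (h : Relation.ReflTransGen (fun x y => x ∈ M ∧ y ∈ M ∧ inn x y ≠ 0) x y) :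
    Relation.ReflTransGen (fun x y => x ∈ M' ∧ y ∈ M' ∧ inn x y ≠ 0) x y :=
  Relation.ReflTransGen.mono (fun _ _ h => ⟨hMM h.1, hMM h.2.1, h.2.2⟩) _ _ h

lemma GraphConnected.insert' {inn : Dt → Dt → ℝ}
    (hsymm : ∀ x y, inn x y = inn y x) {M : Set Dt} (hM : GraphConnected inn M)
    {b c : Dt} (hb : b ∈ M) (hinn : inn b c ≠ 0) :
    GraphConnected inn (insert c M) := by
  set r' := fun x y => x ∈ insert c M ∧ y ∈ insert c M ∧ inn x y ≠ 0 with hr'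
  have hcM : c ∈ insert c M := Set.mem_insert _ _
  have hbM' : b ∈ insert c M := Set.mem_insert_of_mem _ hb
  have edge_bc : Relation.ReflTransGen r' b c :=
    Relation.ReflTransGen.single ⟨hbM', hcM, hinn⟩
  have edge_cb : Relation.ReflTransGen r' c b :=
    Relation.ReflTransGen.single ⟨hcM, hbM', by rw [hsymm]; exact hinn⟩
  intro m hm n hn
  rcases Set.mem_insert_iff.1 hm with hm | hm <;> rcases Set.mem_insert_iff.1 hn with hn | hn
  · rw [hm, hn]
  · refine Relation.ReflTransGen.trans ?_ (GraphConnected.mono_rel (Set.subset_insert _ _) (hM b hb n hn))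
    rw [hm]; exact edge_cb
  · refine Relation.ReflTransGen.trans (GraphConnected.mono_rel (Set.subset_insert _ _) (hM m hm b hb)) ?_
    rw [hn]; exact edge_bc
  · exact GraphConnected.mono_rel (Set.subset_insert _ _) (hM m hm n hn)

lemma GraphConnected.singleton (inn : Dt → Dt → ℝ) (x : Dt) :
    GraphConnected inn ({x} : Set Dt) := by
  intro m hm n hn
  rw [Set.mem_singleton_iff] at hm hn
  rw [hm, hn]

end Graph

namespace RootWeightSystem

set_option linter.unusedSectionVars false

variable {A : Type*} [NormedAddCommGroup A] [NormedSpace ℝ A] [FiniteDimensional ℝ A]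
variable (S : RootWeightSystem A)

local notation "D" => Module.Dual ℝ A

lemma supp_lam0_sub_lam0 (Δ : Finset D)
    (hli : LinearIndependent ℝ (fun a : (Δ : Set D) => (a : D))) :
    supp Δ (S.lam0 Δ - S.lam0 Δ) = ∅ := by
  rw [sub_self]
  have hrep : (0 : D) = ∑ b ∈ Δ, (0 : ℝ) • b := by simp
  apply Finset.eq_empty_of_forall_notMem
  intro b hb
  obtain ⟨hbΔ, hne⟩ := mem_supp_iff.1 hb
  exact hne (coeffs_unique hli hrep b hbΔ)

section Key

/-- The inner product of a functional with a combination of `Δ`. -/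
lemma inn_comb {Δ : Finset D} {v : D} {n : D → ℝ} (hvrep : v = ∑ b ∈ Δ, n b • b) (μ : D) :
    S.inn v μ = ∑ b ∈ Δ, n b * S.inn b μ := by
  rw [hvrep, S.inn_sum_left]
  exact Finset.sum_congr rfl fun b _ => S.inn_smul_left (n b) b μ

/-- Subclaim 1: any weight supported in `Y` is `inn`-orthogonal to `v`. -/
lemma sc1 {Δ Y : Finset D} {v : D} {n : D → ℝ} (hbase : S.toRootWeightData.IsBase Δ)
    (hvΦ : v ∈ S.Φ) (hn0 : ∀ b ∈ Δ, 0 ≤ n b) (hvrep : v = ∑ b ∈ Δ, n b • b)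
    (hex : ∃ b ∈ Δ, b ∉ Y ∧ n b ≠ 0)
    (hβv : ∀ l ∈ S.Λ, supp Δ (S.lam0 Δ - l) ⊆ Y →
      ∀ k : ℕ, 0 < k → l - (k : ℝ) • v ∉ S.Λ)
    {l : D} (hl : l ∈ S.Λ) (hsupp : supp Δ (S.lam0 Δ - l) ⊆ Y) :
    S.inn l v = 0 := by
  have hvv : 0 < S.inn v v := S.inn_self_pos hvΦ
  obtain ⟨k, hk⟩ := S.weight_int hvΦ hl
  rcases lt_trichotomy (S.inn l v) 0 with hneg | hzero | hpos
  · -- the reflected weight would have a negative coefficient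
    exfalso
    have hkneg : (k : ℝ) < 0 := by
      rw [← hk]
      exact div_neg_of_neg_of_pos (by linarith) hvv
    have hkneg' : k < 0 := by exact_mod_cast hkneg
    have hμΛ : S.toRootWeightData.refl v l ∈ S.Λ := S.refl_weight_mem hvΦ hl
    obtain ⟨m, hm0, hmrep⟩ := S.lam0_dominates Δ hbase _ hμΛ
    have hrefl : S.toRootWeightData.refl v l = l - (k : ℝ) • v := by
      rw [refl_apply, hk]
    set c := coeffs Δ (S.lam0 Δ - l) with hc
    have hcrep : S.lam0 Δ - l = ∑ b ∈ Δ, c b • b :=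
      coeffs_spec (S.weight_rep_exists hbase hl)
    have hrep2 : S.lam0 Δ - S.toRootWeightData.refl v l
        = ∑ b ∈ Δ, (c b + (k : ℝ) * n b) • b := by
      rw [hrefl]
      have : S.lam0 Δ - (l - (k : ℝ) • v) = (S.lam0 Δ - l) + (k : ℝ) • v := by abel
      rw [this, hcrep, hvrep, Finset.smul_sum, ← Finset.sum_add_distrib]
      exact Finset.sum_congr rfl fun b _ => by rw [smul_smul, ← add_smul]
    obtain ⟨b₀, hb₀Δ, hb₀Y, hb₀n⟩ := hex
    have huniq := base_rep_unique (S.base_li hbase) (hmrep.symm.trans hrep2) b₀ hb₀Δ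
    have hc0 : c b₀ = 0 := by
      apply coeffs_eq_zero_of_not_mem_supp hb₀Δ
      intro hmem
      exact hb₀Y (hsupp hmem)
    have hnpos : 0 < n b₀ := lt_of_le_of_ne (hn0 b₀ hb₀Δ) (Ne.symm hb₀n)
    have := hm0 b₀ hb₀Δ
    rw [huniq, hc0, zero_add] at this
    nlinarith
  · exact hzero
  · -- reflection contradicts the weight condition
    exfalso
    have hkpos : (0 : ℝ) < (k : ℝ) := by
      rw [← hk]
      exact div_pos (by linarith) hvv
    have hkpos' : 0 < k := by exact_mod_cast hkpos
    have hμΛ : S.toRootWeightData.refl v l ∈ S.Λ := S.refl_weight_mem hvΦ hl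
    have hcast : ((k.toNat : ℕ) : ℝ) = (k : ℝ) := by
      exact_mod_cast Int.toNat_of_nonneg hkpos'.le
    have hrefl : S.toRootWeightData.refl v l = l - ((k.toNat : ℕ) : ℝ) • v := by
      rw [refl_apply, hk, hcast]
    exact hβv l hl hsupp k.toNat (by omega) (hrefl ▸ hμΛ)

/-- Subclaim 2: the highest weight is orthogonal to the support of `v`. -/
lemma sc2 {Δ Y : Finset D} {v : D} {n : D → ℝ} (hbase : S.toRootWeightData.IsBase Δ)
    (hvΦ : v ∈ S.Φ) (hn0 : ∀ b ∈ Δ, 0 ≤ n b) (hvrep : v = ∑ b ∈ Δ, n b • b)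
    (hex : ∃ b ∈ Δ, b ∉ Y ∧ n b ≠ 0)
    (hβv : ∀ l ∈ S.Λ, supp Δ (S.lam0 Δ - l) ⊆ Y →
      ∀ k : ℕ, 0 < k → l - (k : ℝ) • v ∉ S.Λ) :
    ∀ b ∈ Δ, n b ≠ 0 → S.inn (S.lam0 Δ) b = 0 := by
  have h0 : S.inn (S.lam0 Δ) v = 0 :=
    S.sc1 hbase hvΦ hn0 hvrep hex hβv (S.lam0_mem Δ hbase)
      (by rw [S.supp_lam0_sub_lam0 Δ (S.base_li hbase)]; exact Finset.empty_subset _)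
  rw [S.inn_symm, S.inn_comb hvrep (S.lam0 Δ)] at h0
  intro b hb hnb
  have hall := (Finset.sum_eq_zero_iff_of_nonneg ?_).1 h0 b hb
  · rcases mul_eq_zero.1 hall with h | h
    · exact absurd h hnb
    · rw [S.inn_symm]; exact h
  · intro x hx
    have h1 := S.lam0_dominant hbase hx
    have h2 := hn0 x hx
    exact mul_nonneg h2 (by rw [S.inn_symm]; exact h1)

end Key

end RootWeightSystem

namespace RootWeightSystem

set_option linter.unusedSectionVars false

variable {A : Type*} [NormedAddCommGroup A] [NormedSpace ℝ A] [FiniteDimensional ℝ A]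
variable (S : RootWeightSystem A)

local notation "D" => Module.Dual ℝ A

lemma base_mem_phi {Δ : Finset D} (hbase : S.toRootWeightData.IsBase Δ) {b : D}
    (hb : b ∈ Δ) : b ∈ S.Φ := by
  have := hbase.1 (show b ∈ (Δ : Set D) from hb)
  exact_mod_cast this

/-- Subclaims 3--6 and the conclusion of the key lemma in the "negative root" case. -/
lemma key_neg {Δ Y : Finset D} {v : D} {n : D → ℝ}
    (hbase : S.toRootWeightData.IsBase Δ) (hadm : S.toRootWeightData.Admissible Δ Y)
    (hvΦ : v ∈ S.Φ) (hn0 : ∀ b ∈ Δ, 0 ≤ n b) (hvrep : v = ∑ b ∈ Δ, n b • b)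
    (hex : ∃ b ∈ Δ, b ∉ Y ∧ n b ≠ 0)
    (hβv : ∀ l ∈ S.Λ, supp Δ (S.lam0 Δ - l) ⊆ Y →
      ∀ k : ℕ, 0 < k → l - (k : ℝ) • v ∉ S.Λ) :
    ∃ x ∈ S.Face Δ Y, 0 < (-v) x := by
  classical
  have hli := S.base_li hbase
  have hYΔ : Y ⊆ Δ := hadm.1
  -- Subclaim 2
  have hl0 : ∀ b ∈ Δ, n b ≠ 0 → S.inn (S.lam0 Δ) b = 0 :=
    S.sc2 hbase hvΦ hn0 hvrep hex hβv
  have hl0v : S.inn (S.lam0 Δ) v = 0 :=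
    S.sc1 hbase hvΦ hn0 hvrep hex hβv (S.lam0_mem Δ hbase)
      (by rw [S.supp_lam0_sub_lam0 Δ hli]; exact Finset.empty_subset _)
  set M : Set D := (↑Y : Set D) ∪ {S.lam0 Δ} with hM
  set r : D → D → Prop := fun x y => x ∈ M ∧ y ∈ M ∧ S.inn x y ≠ 0 with hr
  have hlam0M : S.lam0 Δ ∈ M := Set.mem_union_right _ rfl
  -- Subclaim 3 : every element of Y is orthogonal to v
  have sc3 : ∀ b' ∈ Y, S.inn b' v = 0 := by
    have hP : ∀ q, Relation.ReflTransGen r (S.lam0 Δ) q →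
        ∃ Y'' : Finset D, Y'' ⊆ Y ∧ S.toRootWeightData.Admissible Δ Y'' ∧
          (∀ b ∈ Y'', S.inn b v = 0) ∧ (q = S.lam0 Δ ∨ q ∈ Y'') := by
      intro q h
      induction h with
      | refl =>
          refine ⟨∅, Finset.empty_subset _, ⟨Finset.empty_subset _, ?_⟩, by simp, Or.inl rfl⟩
          simp only [Finset.coe_empty, Set.empty_union]
          exact GraphConnected.singleton _ _
      | @tail p q' hpath hedge ih =>
          obtain ⟨Y'', hY''Y, hY''adm, hY''inn, hp⟩ := ih
          obtain ⟨hpM, hq'M, hinn⟩ := hedge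
          by_cases hq'lam : q' = S.lam0 Δ
          · exact ⟨Y'', hY''Y, hY''adm, hY''inn, Or.inl hq'lam⟩
          by_cases hq'Y'' : q' ∈ Y''
          · exact ⟨Y'', hY''Y, hY''adm, hY''inn, Or.inr hq'Y''⟩
          have hq'Y : q' ∈ Y := by
            rcases (Set.mem_union _ _ _).1 hq'M with h | h
            · exact_mod_cast h
            · exact absurd h hq'lam
          set Y₂ : Finset D := insert q' Y'' with hY₂
          have hY₂Y : Y₂ ⊆ Y := Finset.insert_subset hq'Y hY''Y
          have hpM'' : p ∈ (↑Y'' : Set D) ∪ {S.lam0 Δ} := by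
            rcases hp with h | h
            · exact Set.mem_union_right _ (by rw [h]; rfl)
            · exact Set.mem_union_left _ (by exact_mod_cast h)
          have hadm₂ : S.toRootWeightData.Admissible Δ Y₂ := by
            refine ⟨hY₂Y.trans hYΔ, ?_⟩
            have hins := GraphConnected.insert' S.inn_symm hY''adm.2 hpM'' hinn
            have hEq : insert q' ((↑Y'' : Set D) ∪ {S.lam0 Δ})
                = (↑Y₂ : Set D) ∪ {S.lam0 Δ} := by
              rw [hY₂, Finset.coe_insert, Set.insert_union]
            rw [hEq] at hins
            exact hins
          obtain ⟨l, hlΛ, hlsupp⟩ :=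
            (S.admissible_iff_support Δ hbase Y₂ (hY₂Y.trans hYΔ)).1 hadm₂
          have hlv : S.inn l v = 0 :=
            S.sc1 hbase hvΦ hn0 hvrep hex hβv hlΛ (by rw [hlsupp]; exact hY₂Y)
          have hdv : S.inn (S.lam0 Δ - l) v = 0 := by
            rw [S.inn_sub_left, hl0v, hlv, sub_zero]
          have hrepl : S.lam0 Δ - l = ∑ b ∈ Δ, coeffs Δ (S.lam0 Δ - l) b • b :=
            coeffs_spec (S.weight_rep_exists hbase hlΛ)
          have hsum : ∑ b ∈ Δ, coeffs Δ (S.lam0 Δ - l) b * S.inn b v = 0 := by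
            rw [← S.inn_comb hrepl v]; exact hdv
          have hq'Δ : q' ∈ Δ := hYΔ hq'Y
          have hsingle : ∑ b ∈ Δ, coeffs Δ (S.lam0 Δ - l) b * S.inn b v
              = coeffs Δ (S.lam0 Δ - l) q' * S.inn q' v := by
            refine Finset.sum_eq_single_of_mem q' hq'Δ (fun x hx hxne => ?_)
            by_cases hcx : coeffs Δ (S.lam0 Δ - l) x = 0
            · rw [hcx, zero_mul]
            · have hxsupp : x ∈ Y₂ := hlsupp ▸ mem_supp_iff.2 ⟨hx, hcx⟩
              have hxY'' : x ∈ Y'' := by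
                rcases Finset.mem_insert.1 hxsupp with h | h
                · exact absurd h hxne
                · exact h
              rw [hY''inn x hxY'', mul_zero]
          have hcq' : coeffs Δ (S.lam0 Δ - l) q' ≠ 0 := by
            have : q' ∈ supp Δ (S.lam0 Δ - l) := by
              rw [hlsupp]; exact Finset.mem_insert_self _ _
            exact (mem_supp_iff.1 this).2
          have hq'v : S.inn q' v = 0 := by
            rw [hsingle] at hsum
            rcases mul_eq_zero.1 hsum with h | h
            · exact absurd h hcq'
            · exact h
          refine ⟨Y₂, hY₂Y, hadm₂, ?_, Or.inr (Finset.mem_insert_self _ _)⟩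
          intro b hb
          rcases Finset.mem_insert.1 hb with h | h
          · rw [h]; exact hq'v
          · exact hY''inn b h
    intro b' hb'
    obtain ⟨Y'', _, _, hY''inn, hq⟩ :=
      hP b' (hadm.2 (S.lam0 Δ) hlam0M b' (Set.mem_union_left _ (by exact_mod_cast hb')))
    rcases hq with h | h
    · rw [h]; exact hl0v
    · exact hY''inn b' h
  -- Subclaim 4 : Y is disjoint from the support of v
  have sc4 : ∀ b' ∈ Y, n b' = 0 := by
    have hQ : ∀ q, Relation.ReflTransGen r (S.lam0 Δ) q →
        q = S.lam0 Δ ∨ (q ∈ Y ∧ n q = 0) := by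
      intro q h
      induction h with
      | refl => exact Or.inl rfl
      | @tail p q' hpath hedge ih =>
          obtain ⟨hpM, hq'M, hinn⟩ := hedge
          rcases (Set.mem_union _ _ _).1 hq'M with hq'Y | hq'lam
          · right
            have hq'Y : q' ∈ Y := by exact_mod_cast hq'Y
            refine ⟨hq'Y, ?_⟩
            by_contra hnq
            have hq'Δ : q' ∈ Δ := hYΔ hq'Y
            apply hinn
            rcases ih with hp | ⟨hpY, hpn⟩
            · rw [hp]; exact hl0 q' hq'Δ hnq
            · have h0 : S.inn v p = 0 := by rw [S.inn_symm]; exact sc3 p hpY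
              rw [S.inn_comb hvrep p] at h0
              have hall := (Finset.sum_eq_zero_iff_of_nonpos ?_).1 h0 q' hq'Δ
              · rcases mul_eq_zero.1 hall with h | h
                · exact absurd h hnq
                · rw [S.inn_symm]; exact h
              · intro x hx
                by_cases hxp : x = p
                · rw [hxp, hpn, zero_mul]
                · exact mul_nonpos_iff.2
                    (Or.inl ⟨hn0 x hx, S.base_obtuse hbase hx (hYΔ hpY) hxp⟩)
          · exact Or.inl hq'lam
    intro b' hb'
    rcases hQ b' (hadm.2 (S.lam0 Δ) hlam0M b' (Set.mem_union_left _ (by exact_mod_cast hb')))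
      with h | ⟨_, h⟩
    · by_contra hnb'
      have hz : S.inn (S.lam0 Δ) b' = 0 := hl0 b' (hYΔ hb') hnb'
      have hΦ : b' ∈ S.Φ := S.base_mem_phi hbase (hYΔ hb')
      rw [h] at hz
      exact absurd hz (ne_of_gt (S.inn_self_pos (h ▸ hΦ)))
    · exact h
  -- Subclaim 5 : cross-orthogonality between Y and the support of v
  have sc5 : ∀ b' ∈ Y, ∀ b ∈ Δ, n b ≠ 0 → S.inn b b' = 0 := by
    intro b' hb' b hb hnb
    have h0 : S.inn v b' = 0 := by rw [S.inn_symm]; exact sc3 b' hb'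
    rw [S.inn_comb hvrep b'] at h0
    have hall := (Finset.sum_eq_zero_iff_of_nonpos ?_).1 h0 b hb
    · rcases mul_eq_zero.1 hall with h | h
      · exact absurd h hnb
      · exact h
    · intro x hx
      by_cases hnx : n x = 0
      · rw [hnx, zero_mul]
      · have hxY : x ∉ Y := fun hxY => hnx (sc4 x hxY)
        have hxb' : x ≠ b' := fun hEq => hxY (hEq ▸ hb')
        exact mul_nonpos_iff.2 (Or.inl ⟨hn0 x hx, S.base_obtuse hbase hx (hYΔ hb') hxb'⟩)
  -- Subclaim 6 : each weight not supported in Y has support meeting the complement of Y ∪ supp v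
  have sc6 : ∀ l ∈ S.Λ, ¬ (supp Δ (S.lam0 Δ - l) ⊆ Y) →
      ∃ b ∈ Δ, b ∉ Y ∧ n b = 0 ∧ coeffs Δ (S.lam0 Δ - l) b ≠ 0 := by
    intro l hl hnsub
    by_contra hcon
    push_neg at hcon
    set T := supp Δ (S.lam0 Δ - l) with hT
    have hTΔ : T ⊆ Δ := Finset.filter_subset _ _
    have hTadm : S.toRootWeightData.Admissible Δ T :=
      (S.admissible_iff_support Δ hbase T hTΔ).2 ⟨l, hl, rfl⟩
    obtain ⟨bs, hbsT, hbsY⟩ := Finset.not_subset.1 hnsub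
    have hbsΔ : bs ∈ Δ := hTΔ hbsT
    have hbsn : n bs ≠ 0 := by
      intro h0
      exact (mem_supp_iff.1 hbsT).2 (hcon bs hbsΔ hbsY h0)
    set M' : Set D := (↑T : Set D) ∪ {S.lam0 Δ} with hM'
    set r' : D → D → Prop := fun x y => x ∈ M' ∧ y ∈ M' ∧ S.inn x y ≠ 0 with hr'
    have hR : ∀ q, Relation.ReflTransGen r' (S.lam0 Δ) q →
        q = S.lam0 Δ ∨ (q ∈ T ∧ n q = 0) := by
      intro q h
      induction h with
      | refl => exact Or.inl rfl
      | @tail p q' hpath hedge ih =>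
          obtain ⟨hpM, hq'M, hinn⟩ := hedge
          rcases (Set.mem_union _ _ _).1 hq'M with hq'T | hq'lam
          · right
            have hq'T : q' ∈ T := by exact_mod_cast hq'T
            refine ⟨hq'T, ?_⟩
            by_contra hnq
            apply hinn
            rcases ih with hp | ⟨hpT, hpn⟩
            · rw [hp]; exact hl0 q' (hTΔ hq'T) hnq
            · have hpY : p ∈ Y := by
                by_contra hpY
                exact (mem_supp_iff.1 hpT).2 (hcon p (hTΔ hpT) hpY hpn)
              rw [S.inn_symm]
              exact sc5 p hpY q' (hTΔ hq'T) hnq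
          · exact Or.inl hq'lam
    have hreach := hTadm.2 (S.lam0 Δ) (Set.mem_union_right _ rfl) bs
      (Set.mem_union_left _ (by exact_mod_cast hbsT))
    rcases hR bs hreach with h | ⟨_, h⟩
    · have hz := hl0 bs hbsΔ hbsn
      rw [h] at hz
      exact absurd hz (ne_of_gt (S.inn_self_pos (h ▸ S.base_mem_phi hbase hbsΔ)))
    · exact absurd h hbsn
  -- construction of the point
  set cK : ℝ → D → ℝ := fun K b => if b ∈ Y then 0 else if n b = 0 then K else -1 with hcK
  have hxex : ∀ K : ℝ, ∃ x : A, ∀ b ∈ Δ, b x = cK K b :=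
    fun K => exists_forall_eval hli (cK K)
  choose xK hxK using hxex
  have hax : ∀ K, (-v) (xK K) = ∑ b ∈ Δ, n b := by
    intro K
    have hvx : v (xK K) = ∑ b ∈ Δ, n b * cK K b := by
      conv_lhs => rw [hvrep]
      rw [sum_smul_apply]
      exact Finset.sum_congr rfl fun b hb => by rw [hxK K b hb]
    have hterm : ∀ b ∈ Δ, n b * cK K b = -(n b) := by
      intro b hb
      by_cases hbY : b ∈ Y
      · rw [hcK]; simp [hbY, sc4 b hbY]
      · by_cases hnb : n b = 0
        · rw [hcK]; simp [hbY, hnb]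
        · rw [hcK]; simp [hbY, hnb]
    rw [LinearMap.neg_apply, hvx, Finset.sum_congr rfl hterm]
    simp
  have hapos : 0 < ∑ b ∈ Δ, n b := by
    obtain ⟨b₀, hb₀Δ, _, hb₀n⟩ := hex
    exact Finset.sum_pos' (fun b hb => hn0 b hb)
      ⟨b₀, hb₀Δ, lt_of_le_of_ne (hn0 _ hb₀Δ) (Ne.symm hb₀n)⟩
  have hev : ∀ l ∈ S.Λ, ∀ᶠ K in Filter.atTop (α := ℝ),
      (¬ supp Δ (S.lam0 Δ - l) ⊆ Y → 0 < (S.lam0 Δ - l) (xK K)) := by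
    intro l hl
    by_cases hsub : supp Δ (S.lam0 Δ - l) ⊆ Y
    · exact Filter.Eventually.of_forall fun K h => absurd hsub h
    · obtain ⟨b₀, hb₀Δ, hb₀Y, hb₀n, hb₀c⟩ := sc6 l hl hsub
      set c := coeffs Δ (S.lam0 Δ - l) with hc
      set PP := ∑ b ∈ Δ.filter (fun b => b ∉ Y ∧ n b = 0), c b with hPP
      set NN := ∑ b ∈ Δ.filter (fun b => b ∉ Y ∧ n b ≠ 0), c b with hNN
      have heval : ∀ K, (S.lam0 Δ - l) (xK K) = PP * K - NN := by
        intro K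
        have h1 : (S.lam0 Δ - l) (xK K) = ∑ b ∈ Δ, c b * cK K b := by
          conv_lhs => rw [coeffs_spec (S.weight_rep_exists hbase hl)]
          rw [sum_smul_apply]
          exact Finset.sum_congr rfl fun b hb => by rw [hxK K b hb]
        rw [h1, ← Finset.sum_filter_add_sum_filter_not Δ (fun b => b ∈ Y)]
        have hz1 : ∑ b ∈ Δ.filter (fun b => b ∈ Y), c b * cK K b = 0 :=
          Finset.sum_eq_zero fun b hb => by
            rw [hcK]; simp [(Finset.mem_filter.1 hb).2]
        rw [hz1, zero_add,
          ← Finset.sum_filter_add_sum_filter_not (Δ.filter (fun b => ¬ b ∈ Y))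
            (fun b => n b = 0), Finset.filter_filter, Finset.filter_filter]
        have hz2 : ∑ b ∈ Δ.filter (fun b => ¬ b ∈ Y ∧ n b = 0), c b * cK K b = PP * K := by
          rw [hPP, Finset.sum_mul]
          refine Finset.sum_congr rfl fun b hb => ?_
          obtain ⟨-, hbY, hbn⟩ := Finset.mem_filter.1 hb
          rw [hcK]; simp [hbY, hbn]
        have hz3 : ∑ b ∈ Δ.filter (fun b => ¬ b ∈ Y ∧ ¬ n b = 0), c b * cK K b = -NN := by
          rw [hNN, ← Finset.sum_neg_distrib]
          refine Finset.sum_congr rfl fun b hb => ?_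
          obtain ⟨-, hbY, hbn⟩ := Finset.mem_filter.1 hb
          rw [hcK]; simp [hbY, hbn]
        rw [hz2, hz3]; ring
      have hPPpos : 0 < PP := by
        refine Finset.sum_pos' (fun b hb => ?_) ⟨b₀, ?_, ?_⟩
        · exact S.weight_coeffs_nonneg hbase hl b (Finset.mem_filter.1 hb).1
        · exact Finset.mem_filter.2 ⟨hb₀Δ, hb₀Y, hb₀n⟩
        · exact lt_of_le_of_ne (S.weight_coeffs_nonneg hbase hl b₀ hb₀Δ) (Ne.symm hb₀c)
      filter_upwards [Filter.eventually_gt_atTop (NN / PP)] with K hK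
      intro _
      rw [heval K]
      rw [div_lt_iff₀ hPPpos] at hK
      nlinarith
  have hev2 : ∀ᶠ K in Filter.atTop (α := ℝ), ∀ l ∈ S.Λ,
      (¬ supp Δ (S.lam0 Δ - l) ⊆ Y → 0 < (S.lam0 Δ - l) (xK K)) :=
    (Filter.eventually_all_finset S.Λ).2 hev
  obtain ⟨K, hK⟩ := hev2.exists
  refine ⟨xK K, ⟨?_, hK⟩, ?_⟩
  · intro b hb
    rw [hxK K b (hYΔ hb), hcK]
    simp [hb]
  · rw [hax K]; exact hapos

end RootWeightSystem


namespace RootWeightSystem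

set_option linter.unusedSectionVars false

variable {A : Type*} [NormedAddCommGroup A] [NormedSpace ℝ A] [FiniteDimensional ℝ A]
variable (S : RootWeightSystem A)

local notation "D" => Module.Dual ℝ A

lemma comb_mem_span {Δ Y : Finset D} {v : D} {n : D → ℝ} (hYΔ : Y ⊆ Δ)
    (hvrep : v = ∑ b ∈ Δ, n b • b) (h : ∀ b ∈ Δ, b ∉ Y → n b = 0) :
    v ∈ Submodule.span ℝ (Y : Set D) := by
  rw [hvrep]
  refine Submodule.sum_mem _ fun b hb => ?_
  by_cases hbY : b ∈ Y
  · exact Submodule.smul_mem _ _ (Submodule.subset_span hbY)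
  · rw [h b hb hbY, zero_smul]; exact Submodule.zero_mem _

/-- The face `F_Y^Δ` is non-empty. -/
lemma face_nonempty {Δ Y : Finset D} (hbase : S.toRootWeightData.IsBase Δ) (hYΔ : Y ⊆ Δ) :
    (S.Face Δ Y).Nonempty := by
  classical
  obtain ⟨x, hx⟩ := exists_forall_eval (S.base_li hbase) (fun b => if b ∈ Y then 0 else 1)
  refine ⟨x, ?_, ?_⟩
  · intro b hb; rw [hx b (hYΔ hb)]; simp [hb]
  · intro l hl hnsub
    have h1 : (S.lam0 Δ - l) x
        = ∑ b ∈ Δ, coeffs Δ (S.lam0 Δ - l) b * (if b ∈ Y then 0 else 1) := by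
      conv_lhs => rw [coeffs_spec (S.weight_rep_exists hbase hl)]
      rw [sum_smul_apply]
      exact Finset.sum_congr rfl fun b hb => by rw [hx b hb]
    obtain ⟨b₁, hb₁supp, hb₁Y⟩ := Finset.not_subset.1 hnsub
    have hb₁Δ : b₁ ∈ Δ := (mem_supp_iff.1 hb₁supp).1
    rw [h1]
    refine Finset.sum_pos' (fun b hb => ?_) ⟨b₁, hb₁Δ, ?_⟩
    · by_cases hbY : b ∈ Y
      · simp [hbY]
      · simp only [if_neg hbY, mul_one]
        exact S.weight_coeffs_nonneg hbase hl b hb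
    · simp only [if_neg hb₁Y, mul_one]
      exact lt_of_le_of_ne (S.weight_coeffs_nonneg hbase hl b₁ hb₁Δ)
        (Ne.symm (mem_supp_iff.1 hb₁supp).2)

/-- **Key Lemma**: if `a ∉ ⟨Y⟩` and no weight supported in `Y` has `λ + k a ∈ Λ`,
then `a` is positive somewhere on the face `F_Y^Δ`. -/
lemma exists_pos_on_face {Δ Y : Finset D}
    (hbase : S.toRootWeightData.IsBase Δ) (hadm : S.toRootWeightData.Admissible Δ Y)
    {a : D} (ha : a ∈ S.Φ) (hspan : a ∉ Submodule.span ℝ (Y : Set D))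
    (hβ : ∀ l ∈ S.Λ, supp Δ (S.lam0 Δ - l) ⊆ Y →
      ∀ k : ℕ, 0 < k → l + (k : ℝ) • a ∉ S.Λ) :
    ∃ x ∈ S.Face Δ Y, 0 < a x := by
  classical
  have hli := S.base_li hbase
  have hYΔ : Y ⊆ Δ := hadm.1
  rcases hbase.2.2 a ha with ⟨n, hn0, hrep⟩ | ⟨n, hn0, hrep⟩
  · -- `a` is a positive root
    have hex : ∃ b ∈ Δ, b ∉ Y ∧ n b ≠ 0 := by
      by_contra hcon; push_neg at hcon
      exact hspan (comb_mem_span hYΔ hrep hcon)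
    obtain ⟨x, hx⟩ := exists_forall_eval hli (fun b => if b ∈ Y then 0 else 1)
    refine ⟨x, ⟨?_, ?_⟩, ?_⟩
    · intro b hb; rw [hx b (hYΔ hb)]; simp [hb]
    · intro l hl hnsub
      have h1 : (S.lam0 Δ - l) x
          = ∑ b ∈ Δ, coeffs Δ (S.lam0 Δ - l) b * (if b ∈ Y then 0 else 1) := by
        conv_lhs => rw [coeffs_spec (S.weight_rep_exists hbase hl)]
        rw [sum_smul_apply]
        exact Finset.sum_congr rfl fun b hb => by rw [hx b hb]
      obtain ⟨b₁, hb₁supp, hb₁Y⟩ := Finset.not_subset.1 hnsub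
      have hb₁Δ : b₁ ∈ Δ := (mem_supp_iff.1 hb₁supp).1
      rw [h1]
      refine Finset.sum_pos' (fun b hb => ?_) ⟨b₁, hb₁Δ, ?_⟩
      · by_cases hbY : b ∈ Y
        · simp [hbY]
        · simp only [if_neg hbY, mul_one]
          exact S.weight_coeffs_nonneg hbase hl b hb
      · simp only [if_neg hb₁Y, mul_one]
        exact lt_of_le_of_ne (S.weight_coeffs_nonneg hbase hl b₁ hb₁Δ)
          (Ne.symm (mem_supp_iff.1 hb₁supp).2)
    · have h2 : a x = ∑ b ∈ Δ, n b * (if b ∈ Y then 0 else 1) := by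
        conv_lhs => rw [hrep]
        rw [sum_smul_apply]
        exact Finset.sum_congr rfl fun b hb => by rw [hx b hb]
      obtain ⟨b₀, hb₀Δ, hb₀Y, hb₀n⟩ := hex
      rw [h2]
      refine Finset.sum_pos' (fun b hb => ?_) ⟨b₀, hb₀Δ, ?_⟩
      · by_cases hbY : b ∈ Y
        · simp [hbY]
        · simp only [if_neg hbY, mul_one]; exact hn0 b hb
      · simp only [if_neg hb₀Y, mul_one]
        exact lt_of_le_of_ne (hn0 b₀ hb₀Δ) (Ne.symm hb₀n)
  · -- `a` is a negative root
    set v : D := ∑ b ∈ Δ, n b • b with hv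
    have hva : a = -v := by rw [hv]; exact hrep
    have hvΦ : v ∈ S.Φ := by
      have hneg := S.neg_mem a ha
      rw [hva, neg_neg] at hneg; exact hneg
    have hex : ∃ b ∈ Δ, b ∉ Y ∧ n b ≠ 0 := by
      by_contra hcon; push_neg at hcon
      apply hspan
      rw [hva]
      exact Submodule.neg_mem _ (comb_mem_span hYΔ hv hcon)
    have hβv : ∀ l ∈ S.Λ, supp Δ (S.lam0 Δ - l) ⊆ Y →
        ∀ k : ℕ, 0 < k → l - (k : ℝ) • v ∉ S.Λ := by
      intro l hl hs k hk
      have hb := hβ l hl hs k hk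
      rwa [hva, smul_neg, ← sub_eq_add_neg] at hb
    obtain ⟨x, hxF, hxv⟩ := S.key_neg hbase hadm hvΦ hn0 hv hex hβv
    exact ⟨x, hxF, by rw [hva]; exact hxv⟩

end RootWeightSystem

namespace RootWeightSystem

set_option linter.unusedSectionVars false

variable {A : Type*} [NormedAddCommGroup A] [NormedSpace ℝ A] [FiniteDimensional ℝ A]
variable (S : RootWeightSystem A)

local notation "D" => Module.Dual ℝ A

lemma abarRel_equivalence : Equivalence S.AbarRel := by
  constructor
  · intro p
    exact ⟨rfl, by simp⟩
  · rintro p q ⟨h1, h2⟩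
    refine ⟨h1.symm, ?_⟩
    rw [← h1]
    have h3 := Submodule.neg_mem _ h2
    simpa using h3
  · rintro p q r ⟨h1, h2⟩ ⟨h3, h4⟩
    refine ⟨h1.trans h3, ?_⟩
    have h4' : q.2 - r.2 ∈ Submodule.span ℝ p.1.val := by rw [h1]; exact h4
    have h5 := Submodule.add_mem _ h2 h4'
    simpa using h5

lemma mkAbar_eq_iff {F F' : S.Faces} {u w : A} :
    S.mkAbar F u = S.mkAbar F' w ↔ F = F' ∧ u - w ∈ Submodule.span ℝ F.val := by
  constructor
  · intro h
    exact ((S.abarRel_equivalence).eqvGen_iff).1 (Quot.eq.1 h)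
  · intro h
    exact Quot.sound h

lemma face_smul_mem {Δ Y : Finset D} {x : A} (hx : x ∈ S.Face Δ Y) {c : ℝ} (hc : 0 < c) :
    c • x ∈ S.Face Δ Y := by
  refine ⟨fun b hb => ?_, fun l hl hns => ?_⟩
  · rw [map_smul, hx.1 b hb, smul_zero]
  · rw [map_smul, smul_eq_mul]
    exact mul_pos hc (hx.2 l hl hns)

lemma face_add_mem {Δ Y : Finset D} {x y : A} (hx : x ∈ S.Face Δ Y) (hy : y ∈ S.Face Δ Y) :
    x + y ∈ S.Face Δ Y := by
  refine ⟨fun b hb => ?_, fun l hl hns => ?_⟩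
  · rw [map_add, hx.1 b hb, hy.1 b hb, add_zero]
  · rw [map_add]
    exact add_pos (hx.2 l hl hns) (hy.2 l hl hns)

lemma face_sub_smul_eventually {Δ Y : Finset D} {x y : A}
    (hx : x ∈ S.Face Δ Y) (hy : y ∈ S.Face Δ Y) :
    ∀ᶠ δ in nhdsWithin (0:ℝ) (Set.Ioi 0), x - δ • y ∈ S.Face Δ Y := by
  have hcond : ∀ᶠ δ in nhdsWithin (0:ℝ) (Set.Ioi 0), ∀ l ∈ S.Λ,
      (¬ supp Δ (S.lam0 Δ - l) ⊆ Y → 0 < (S.lam0 Δ - l) (x - δ • y)) := by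
    rw [Filter.eventually_all_finset]
    intro l hl
    by_cases hns : supp Δ (S.lam0 Δ - l) ⊆ Y
    · exact Filter.Eventually.of_forall fun δ h => absurd hns h
    · have hxpos : 0 < (S.lam0 Δ - l) x := hx.2 l hl hns
      have htend : Filter.Tendsto (fun δ : ℝ => (S.lam0 Δ - l) (x - δ • y))
          (nhdsWithin (0:ℝ) (Set.Ioi 0)) (nhds ((S.lam0 Δ - l) x)) := by
        have hc : Continuous (fun δ : ℝ => (S.lam0 Δ - l) x - δ * (S.lam0 Δ - l) y) := by
          continuity
        have h0 : Filter.Tendsto (fun δ : ℝ => (S.lam0 Δ - l) x - δ * (S.lam0 Δ - l) y)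
            (nhds 0) (nhds ((S.lam0 Δ - l) x)) := by
          have := hc.tendsto 0
          simpa using this
        have heq : (fun δ : ℝ => (S.lam0 Δ - l) (x - δ • y))
            = fun δ : ℝ => (S.lam0 Δ - l) x - δ * (S.lam0 Δ - l) y := by
          funext δ
          rw [map_sub, map_smul, smul_eq_mul]
        rw [heq]
        exact h0.mono_left nhdsWithin_le_nhds
      exact (htend.eventually (eventually_gt_nhds hxpos)).mono fun δ h _ => h
  filter_upwards [hcond] with δ hδ
  refine ⟨fun b hb => ?_, hδ⟩
  rw [map_sub, map_smul, hx.1 b hb, hy.1 b hb, smul_zero, sub_zero]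

lemma zero_mem_closure_face {Δ Y : Finset D} (hne : (S.Face Δ Y).Nonempty) :
    (0 : A) ∈ closure (S.Face Δ Y) := by
  obtain ⟨x, hx⟩ := hne
  have htend : Filter.Tendsto (fun δ : ℝ => δ • x) (nhdsWithin (0:ℝ) (Set.Ioi 0))
      (nhds (0 : A)) := by
    have h0 : Filter.Tendsto (fun δ : ℝ => δ • x) (nhds (0:ℝ)) (nhds ((0:ℝ) • x)) :=
      (continuous_id.smul continuous_const).tendsto 0
    rw [zero_smul] at h0
    exact h0.mono_left nhdsWithin_le_nhds
  refine mem_closure_of_tendsto htend ?_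
  filter_upwards [self_mem_nhdsWithin] with δ hδ
  exact S.face_smul_mem hx hδ

lemma closure_face_eval_zero {Δ Y : Finset D} {b : D} (hb : b ∈ Y) :
    closure (S.Face Δ Y) ⊆ {x : A | b x = 0} :=
  closure_minimal (fun x hx => hx.1 b hb)
    (isClosed_eq (LinearMap.continuous_of_finiteDimensional b) continuous_const)

lemma closure_face_eval_nonneg {Δ Y : Finset D} {l : D} (hl : l ∈ S.Λ)
    (hns : ¬ supp Δ (S.lam0 Δ - l) ⊆ Y) :
    closure (S.Face Δ Y) ⊆ {x : A | 0 ≤ (S.lam0 Δ - l) x} :=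
  closure_minimal (fun x hx => (hx.2 l hl hns).le)
    (isClosed_le continuous_const (LinearMap.continuous_of_finiteDimensional _))

lemma isOpen_gamma (F : S.Faces) {U : Set A} (hU : IsOpen U) (hB : IsBounded U) :
    IsOpen (S.Gamma F U) :=
  TopologicalSpace.GenerateOpen.basic _ ⟨F, U, hU, hB, rfl⟩

lemma eventually_mem_of_isOpen {O : Set S.Abar} (hO : IsOpen O) {q : S.Abar}
    {ι : Type*} {lf : Filter ι} {znet : ι → S.Abar}
    (hgen : ∀ (F : S.Faces) (U : Set A), IsOpen U → IsBounded U →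
      q ∈ S.Gamma F U → ∀ᶠ R in lf, znet R ∈ S.Gamma F U)
    (hq : q ∈ O) :
    ∀ᶠ R in lf, znet R ∈ O := by
  have hO' : TopologicalSpace.GenerateOpen
      {V : Set S.Abar | ∃ (F : S.Faces) (U : Set A),
        IsOpen U ∧ IsBounded U ∧ V = S.Gamma F U} O := hO
  revert hq
  induction hO' with
  | basic V hV =>
      intro hq
      obtain ⟨F, U, hU, hB, rfl⟩ := hV
      exact hgen F U hU hB hq
  | univ => exact fun _ => Filter.Eventually.of_forall fun _ => trivial
  | inter s t h1 h2 ih1 ih2 =>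
      intro hq
      exact ((ih1 h1 hq.1).and (ih2 h2 hq.2)).mono fun R hR => ⟨hR.1, hR.2⟩
  | sUnion 𝒮' h' ih =>
      intro hq
      obtain ⟨s, hs𝒮, hqs⟩ := hq
      exact (ih s hs𝒮 (h' s hs𝒮) hqs).mono fun R hR => ⟨s, hs𝒮, hR⟩

end RootWeightSystem

namespace RootWeightSystem

set_option linter.unusedSectionVars false

variable {A : Type*} [NormedAddCommGroup A] [NormedSpace ℝ A] [FiniteDimensional ℝ A]
variable (S : RootWeightSystem A)

local notation "D" => Module.Dual ℝ A

lemma mem_closure_stratum (F₀ : S.Faces) (hF₀ : F₀.val = ({0} : Set A))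
    (F : S.Faces) (u : A) {Δ Y : Finset D} (hFeq : F.val = S.Face Δ Y)
    {a : D} {xs : A} (hxsF : xs ∈ S.Face Δ Y) (hxsa : 0 < a xs) (t : ℝ) :
    S.mkAbar F u ∈ closure (S.mkAbar F₀ '' {z : A | -t ≤ a z}) := by
  rw [mem_closure_iff]
  intro O hO hq
  have hgen : ∀ (G : S.Faces) (U : Set A), IsOpen U → IsBounded U →
      S.mkAbar F u ∈ S.Gamma G U → ∀ᶠ R in Filter.atTop (α := ℝ),
        S.mkAbar F₀ (u + R • xs) ∈ S.Gamma G U := by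
    intro G U hU hB hqγ
    obtain ⟨F', hF'cl, w, hwmem, heq⟩ := hqγ
    obtain ⟨hFF', hs⟩ := S.mkAbar_eq_iff.1 heq
    rw [← hFF'] at hF'cl
    obtain ⟨wU, hwU, g, hg, hwsum⟩ := Set.mem_add.1 hwmem
    obtain ⟨ΔG, YG, hbG, hadmG, hGeq⟩ := G.2
    have hgface : g ∈ S.Face ΔG YG := by rw [← hGeq]; exact hg
    have hFsub : F.val ⊆ closure G.val := hF'cl
    have hFsub' : S.Face Δ Y ⊆ closure (S.Face ΔG YG) := by
      intro z hz
      rw [← hGeq]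
      exact hFsub (by rw [hFeq]; exact hz)
    have hxscl : xs ∈ closure (S.Face ΔG YG) := hFsub' hxsF
    have hspanF : ∀ y, y ∈ Submodule.span ℝ F.val → ∀ μ : D,
        (∀ z ∈ S.Face Δ Y, μ z = 0) → μ y = 0 := by
      intro y hy μ hμ
      have hle : Submodule.span ℝ F.val ≤ LinearMap.ker μ := by
        refine Submodule.span_le.2 fun z hz => ?_
        rw [SetLike.mem_coe, LinearMap.mem_ker]
        exact hμ z (by rw [← hFeq]; exact hz)
      exact LinearMap.mem_ker.1 (hle hy)
    have hmain : ∀ᶠ R in Filter.atTop (α := ℝ),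
        g + ((u - w) + R • xs) ∈ S.Face ΔG YG := by
      have hpart1 : ∀ R : ℝ, ∀ b ∈ YG, b (g + ((u - w) + R • xs)) = 0 := by
        intro R b hb
        have hcl0 : ∀ z ∈ closure (S.Face ΔG YG), b z = 0 :=
          fun z hz => S.closure_face_eval_zero hb hz
        have h1 : b g = 0 := hgface.1 b hb
        have h2 : b xs = 0 := hcl0 xs hxscl
        have h3 : b (u - w) = 0 := by
          refine hspanF (u - w) hs b fun z hz => ?_
          exact hcl0 z (hFsub' hz)
        rw [map_add, map_add, map_smul, h1, h2, h3, smul_zero, add_zero, add_zero]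
      have hpart2 : ∀ᶠ R in Filter.atTop (α := ℝ), ∀ l ∈ S.Λ,
          (¬ supp ΔG (S.lam0 ΔG - l) ⊆ YG →
            0 < (S.lam0 ΔG - l) (g + ((u - w) + R • xs))) := by
        rw [Filter.eventually_all_finset]
        intro l hl
        by_cases hns : supp ΔG (S.lam0 ΔG - l) ⊆ YG
        · exact Filter.Eventually.of_forall fun R h => absurd hns h
        set φ := S.lam0 ΔG - l with hφ
        have hφg : 0 < φ g := hgface.2 l hl hns
        have hφcl : ∀ z ∈ closure (S.Face ΔG YG), 0 ≤ φ z :=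
          fun z hz => S.closure_face_eval_nonneg hl hns hz
        have hφxs : 0 ≤ φ xs := hφcl xs hxscl
        have hval : ∀ R : ℝ, φ (g + ((u - w) + R • xs))
            = φ g + φ (u - w) + R * φ xs := by
          intro R
          rw [map_add, map_add, map_smul, smul_eq_mul]
          ring
        rcases eq_or_lt_of_le hφxs with hxz | hxpos
        · have hφF : ∀ y ∈ S.Face Δ Y, φ y = 0 := by
            intro y hy
            have hup : 0 ≤ φ (xs + y) := hφcl _ (hFsub' (S.face_add_mem hxsF hy))
            obtain ⟨δ, hδface, hδ⟩ :=
              ((S.face_sub_smul_eventually hxsF hy).and self_mem_nhdsWithin).exists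
            have hdown : 0 ≤ φ (xs - δ • y) := hφcl _ (hFsub' hδface)
            have e1 : φ (xs + y) = φ xs + φ y := map_add _ _ _
            have e2 : φ (xs - δ • y) = φ xs - δ * φ y := by
              rw [map_sub, map_smul, smul_eq_mul]
            have hδpos : 0 < δ := hδ
            nlinarith
          have hφuw : φ (u - w) = 0 := hspanF (u - w) hs φ hφF
          refine Filter.Eventually.of_forall fun R _ => ?_
          rw [hval R, hφuw, ← hxz]
          simp only [mul_zero, add_zero]
          exact hφg
        · filter_upwards [Filter.eventually_gt_atTop ((-(φ g) - φ (u - w)) / φ xs)]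
            with R hR hns'
          rw [hval R]
          rw [div_lt_iff₀ hxpos] at hR
          linarith
      filter_upwards [hpart2] with R hR2
      exact ⟨hpart1 R, fun l hl hns => hR2 l hl hns⟩
    have h0cl : (0 : A) ∈ closure G.val := by
      rw [hGeq]
      exact S.zero_mem_closure_face ⟨g, hgface⟩
    filter_upwards [hmain] with R hR
    refine ⟨F₀, ?_, wU + (g + ((u - w) + R • xs)), ?_, ?_⟩
    · rw [hF₀]
      intro z hz
      rw [Set.mem_singleton_iff.1 hz]
      exact h0cl
    · refine Set.add_mem_add hwU ?_
      show _ ∈ G.val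
      rw [hGeq]
      exact hR
    · have hzeq : u + R • xs = wU + (g + ((u - w) + R • xs)) := by
        rw [← hwsum]
        abel
      rw [hzeq]
  have hev := S.eventually_mem_of_isOpen hO hgen hq
  have hev2 : ∀ᶠ R in Filter.atTop (α := ℝ), -t ≤ a (u + R • xs) := by
    filter_upwards [Filter.eventually_ge_atTop ((-t - a u) / a xs)] with R hR
    rw [map_add, map_smul, smul_eq_mul]
    rw [div_le_iff₀ hxsa] at hR
    linarith
  obtain ⟨R, hRO, hRt⟩ := (hev.and hev2).exists
  exact ⟨S.mkAbar F₀ (u + R • xs), hRO, ⟨u + R • xs, hRt, rfl⟩⟩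

end RootWeightSystem

namespace RootWeightSystem

set_option linter.unusedSectionVars false

variable {A : Type*} [NormedAddCommGroup A] [NormedSpace ℝ A] [FiniteDimensional ℝ A]
variable (S : RootWeightSystem A)

local notation "D" => Module.Dual ℝ A

lemma fOmega_ne_bot_of_nonpos (F₀ : S.Faces) (hF₀ : F₀.val = ({0} : Set A))
    (Ω : Set S.Abar) {F : S.Faces} {u : A} (hpΩ : S.mkAbar F u ∈ Ω)
    {Δ Y : Finset D} (hbase : S.toRootWeightData.IsBase Δ) (hYΔ : Y ⊆ Δ)
    (hFeq : F.val = S.Face Δ Y) {a : D}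
    (hneg : ∀ z ∈ S.Face Δ Y, a z ≤ 0) :
    S.fOmega F₀ Ω a ≠ ⊥ := by
  obtain ⟨f₀, hf₀⟩ := S.face_nonempty hbase hYΔ
  set U := Metric.ball u 1 with hU
  set a' := LinearMap.toContinuousLinearMap a with ha'
  set C := ‖a'‖ * (‖u‖ + 1) with hC
  have hbound : ∀ w' ∈ U, a w' ≤ C := by
    intro w' hw'
    have h1 : a w' ≤ ‖a' w'‖ := by
      have he : a w' = a' w' := rfl
      rw [he, Real.norm_eq_abs]
      exact le_abs_self _
    have h2 : ‖a' w'‖ ≤ ‖a'‖ * ‖w'‖ := a'.le_opNorm w'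
    have h3 : ‖w'‖ ≤ ‖u‖ + 1 := by
      have hd : dist w' u < 1 := Metric.mem_ball.1 hw'
      rw [dist_eq_norm] at hd
      have h4 := norm_sub_norm_le w' u
      linarith
    have h5 : ‖a'‖ * ‖w'‖ ≤ C := by
      rw [hC]
      exact mul_le_mul_of_nonneg_left h3 (norm_nonneg _)
    linarith
  have hq : S.mkAbar F u ∈ S.Gamma F U := by
    refine ⟨F, subset_closure, u + f₀, ?_, ?_⟩
    · exact Set.add_mem_add (Metric.mem_ball_self one_pos) (by rw [hFeq]; exact hf₀)
    · refine (S.mkAbar_eq_iff.2 ⟨rfl, ?_⟩)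
      have he : u - (u + f₀) = -f₀ := by abel
      rw [he]
      exact Submodule.neg_mem _ (Submodule.subset_span (by rw [hFeq]; exact hf₀))
  intro hbot
  unfold fOmega at hbot
  rw [sInf_eq_bot] at hbot
  obtain ⟨x, hx, hlt⟩ := hbot (((-C - 1 : ℝ)) : EReal) (EReal.bot_lt_coe _)
  obtain ⟨t, hts, rfl⟩ := hx
  have htlt : t < -C - 1 := by
    have : (t : EReal) < ((-C - 1 : ℝ) : EReal) := hlt
    exact_mod_cast this
  have hcl := hts hpΩ
  rw [mem_closure_iff] at hcl
  obtain ⟨y, hyO, hyim⟩ :=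
    hcl (S.Gamma F U) (S.isOpen_gamma F Metric.isOpen_ball Metric.isBounded_ball) hq
  obtain ⟨z, hz, hzeq⟩ := hyim
  obtain ⟨F', hF', w, hwmem, hyeq⟩ := hyO
  have heq2 : S.mkAbar F₀ z = S.mkAbar F' w := by rw [hzeq]; exact hyeq
  obtain ⟨hFF', hzw⟩ := S.mkAbar_eq_iff.1 heq2
  have hzwe : z = w := by
    rw [hF₀] at hzw
    rw [Submodule.span_zero_singleton] at hzw
    have := (Submodule.mem_bot ℝ).1 hzw
    exact sub_eq_zero.1 this
  obtain ⟨wU, hwU, g, hg, hwsum⟩ := Set.mem_add.1 hwmem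
  have hag : a g ≤ 0 := hneg g (by rw [← hFeq]; exact hg)
  have haw : a z ≤ C := by
    rw [hzwe, ← hwsum, map_add]
    have := hbound wU hwU
    linarith
  have hzt : -t ≤ a z := hz
  linarith

end RootWeightSystem

/-- For non-empty `Ω ⊆ Ā` and a non-divisible root `a`, one has
`f_Ω(a) = -∞` iff, for every face `F = F_Y^Δ` whose stratum meets `Ω`: `a ∉ ⟨Y⟩` and
for every `λ ∈ Λ` with `[λ₀(Δ) - λ] ⊆ Y` and every positive integer `l`, the element
`λ + l·a` is not a weight. -/
theorem fOmega_eq_bot_iff (S : RootWeightSystem A)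
    (F₀ : S.Faces) (hF₀ : F₀.val = ({0} : Set A))
    (Ω : Set S.Abar) (hΩ : Ω.Nonempty)
    (a : Module.Dual ℝ A) (ha : a ∈ S.Φ) (hared : (2⁻¹ : ℝ) • a ∉ S.Φ) :
    S.fOmega F₀ Ω a = ⊥ ↔
      ∀ (F : S.Faces) (Δ Y : Finset (Module.Dual ℝ A)),
        S.toRootWeightData.IsBase Δ → S.toRootWeightData.Admissible Δ Y →
        F.val = S.Face Δ Y → (∃ p ∈ Ω, ∃ u : A, p = S.mkAbar F u) →
        (a ∉ Submodule.span ℝ ((Y : Set (Module.Dual ℝ A))) ∧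
          ∀ l ∈ S.Λ, supp Δ (S.lam0 Δ - l) ⊆ Y →
            ∀ k : ℕ, 0 < k → l + (k : ℝ) • a ∉ S.Λ) := by
  constructor
  · intro hbot F Δ Y hbase hadm hFeq hmeet
    obtain ⟨p, hpΩ, u, hpu⟩ := hmeet
    have hmem : S.mkAbar F u ∈ Ω := by rw [← hpu]; exact hpΩ
    constructor
    · -- a is not in the span of Y
      intro hspan
      refine absurd hbot
        (S.fOmega_ne_bot_of_nonpos F₀ hF₀ Ω hmem hbase hadm.1 hFeq ?_)
      intro z hz
      let ev : Module.Dual ℝ A →ₗ[ℝ] ℝ :=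
        { toFun := fun μ => μ z
          map_add' := fun μ ν => rfl
          map_smul' := fun c μ => rfl }
      have hle : Submodule.span ℝ ((Y : Set (Module.Dual ℝ A))) ≤ LinearMap.ker ev := by
        refine Submodule.span_le.2 fun b hb => ?_
        rw [SetLike.mem_coe, LinearMap.mem_ker]
        exact hz.1 b (by exact_mod_cast hb)
      have h0 : ev a = 0 := LinearMap.mem_ker.1 (hle hspan)
      have : a z = 0 := h0
      rw [this]
    · -- the weight condition
      intro l hl hsupp k hk hmem2
      refine absurd hbot
        (S.fOmega_ne_bot_of_nonpos F₀ hF₀ Ω hmem hbase hadm.1 hFeq ?_)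
      intro z hz
      have h1 : (S.lam0 Δ - l) z = 0 :=
        eval_eq_zero_of_supp_subset (S.weight_rep_exists hbase hl) hsupp hz.1
      set μ := l + (k : ℝ) • a with hμ
      have h2 : (S.lam0 Δ - μ) z = -((k : ℝ) * a z) := by
        have he : S.lam0 Δ - μ = (S.lam0 Δ - l) - (k : ℝ) • a := by rw [hμ]; abel
        rw [he, LinearMap.sub_apply, LinearMap.smul_apply, h1, smul_eq_mul]
        ring
      have hkpos : (0 : ℝ) < (k : ℝ) := by exact_mod_cast hk
      by_cases hsub2 : supp Δ (S.lam0 Δ - μ) ⊆ Y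
      · have h3 : (S.lam0 Δ - μ) z = 0 :=
          eval_eq_zero_of_supp_subset (S.weight_rep_exists hbase hmem2) hsub2 hz.1
        nlinarith [h2, h3]
      · have h4 : 0 < (S.lam0 Δ - μ) z := hz.2 μ hmem2 hsub2
        nlinarith [h2]
  · intro hRHS
    unfold RootWeightSystem.fOmega
    rw [sInf_eq_bot]
    intro b hb
    obtain ⟨r, hr1, hr2⟩ := EReal.lt_iff_exists_real_btwn.1 hb
    refine ⟨(r : EReal), ⟨r, ?_, rfl⟩, hr2⟩
    intro q hqΩ
    obtain ⟨⟨F, u⟩, rfl⟩ := Quot.exists_rep q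
    obtain ⟨Δ, Y, hbase, hadm, hFeq⟩ := F.2
    obtain ⟨hspan, hβ⟩ := hRHS F Δ Y hbase hadm hFeq ⟨Quot.mk _ (F, u), hqΩ, u, rfl⟩
    obtain ⟨xs, hxsF, hxsa⟩ := S.exists_pos_on_face hbase hadm ha hspan hβ
    exact S.mem_closure_stratum F₀ hF₀ F u hFeq hxsF hxsa r
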